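/- For any Lebesgue measurable function f : ℝ^d → [0,∞] with |{x : f(x) > t}| < ∞ for all t > 0, and any t > 0, the integral of the decreasing rearrangement f_* over (0,t) equals the supremum of ∫_A f over all Lebesgue measurable sets A ⊆ ℝ^d with |A| = t. -/

import Mathlib

open MeasureTheory Set Pointwise
open scoped ENNReal
noncomputable section

abbrev Euc (d : ℕ) := EuclideanSpace ℝ (Fin d)

/-- `gowersPow d k f = ‖f‖_{U_k}^{2^k}` for `k ≥ 1`, defined inductively. -/
noncomputable def gowersPow (d : ℕ) : ℕ → (Euc d → ℝ) → ℝ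
  | 0, f => (∫ x, f x) ^ 2
  | 1, f => (∫ x, f x) ^ 2
  | (k+2), f => ∫ s, gowersPow d (k+1) (fun x => f x * f (x + s))

/-- The Gowers norm `‖f‖_{U_k}`. -/
noncomputable def gowersNorm (d k : ℕ) (f : Euc d → ℝ) : ℝ :=
  gowersPow d k f ^ ((1 : ℝ) / 2 ^ k)

/-- An ellipsoid: affine image of a closed ball (possibly empty). -/
def IsEllipsoid {d : ℕ} (E : Set (Euc d)) : Prop :=
  ∃ (φ : Euc d ≃ᵃ[ℝ] Euc d) (r : ℝ), E = φ '' Metric.closedBall 0 r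

/-- Indicator function of a set. -/
def ind {d : ℕ} (E : Set (Euc d)) : Euc d → ℝ := Set.indicator E 1

/-- `autocorr E s = |E ∩ (E + s)|`. -/
def autocorr {d : ℕ} (E : Set (Euc d)) : Euc d → ℝ :=
  fun s => (volume (E ∩ ((fun x => x + s) '' E))).toReal

/-- `gs` is the decreasing rearrangement on `(0,∞)` of `g : ℝ^d → [0,∞)`:
right-continuous, nonincreasing, equimeasurable with `g` for a.e. level. -/
def IsDecRearr {d : ℕ} (g : Euc d → ℝ) (gs : ℝ → ℝ) : Prop :=
  (∀ s t : ℝ, 0 < s → s ≤ t → gs t ≤ gs s) ∧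
  (∀ t : ℝ, 0 < t → ContinuousWithinAt gs (Ici t) t) ∧
  (∀ᵐ α ∂(volume.restrict (Ioi (0:ℝ))),
    volume {s ∈ Ioi (0:ℝ) | α < gs s} = volume {x | α < g x})

section BathtubHelpers
open Metric

/-- Layer cake formula for `ℝ≥0∞`-valued functions. -/
lemma my_layercake {X : Type*} [MeasurableSpace X] (μ : Measure X) [SFinite μ]
    (g : X → ℝ≥0∞) (hg : Measurable g) :
    ∫⁻ x, g x ∂μ = ∫⁻ α in Ioi (0 : ℝ), μ {x | ENNReal.ofReal α < g x} := by
  have hset : MeasurableSet {p : ℝ × X | ENNReal.ofReal p.1 < g p.2} :=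
    measurableSet_lt (ENNReal.measurable_ofReal.comp measurable_fst) (hg.comp measurable_snd)
  have swap := lintegral_lintegral_swap (μ := volume.restrict (Ioi (0:ℝ))) (ν := μ)
      (f := fun α x => {p : ℝ × X | ENNReal.ofReal p.1 < g p.2}.indicator
        (fun _ => (1:ℝ≥0∞)) (α, x))
      ((measurable_one.indicator hset).aemeasurable)
  have lhs : ∫⁻ α in Ioi (0:ℝ), ∫⁻ x, {p : ℝ × X | ENNReal.ofReal p.1 < g p.2}.indicator
      (fun _ => (1:ℝ≥0∞)) (α, x) ∂μ
      = ∫⁻ α in Ioi (0:ℝ), μ {x | ENNReal.ofReal α < g x} := by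
    refine lintegral_congr fun α => ?_
    have : (fun x => {p : ℝ × X | ENNReal.ofReal p.1 < g p.2}.indicator
        (fun _ => (1:ℝ≥0∞)) (α, x))
        = fun x => ({x : X | ENNReal.ofReal α < g x}).indicator (fun _ => (1:ℝ≥0∞)) x := by
      funext x
      simp [Set.indicator_apply]
    rw [this]
    exact lintegral_indicator_one (hg measurableSet_Ioi)
  have rhs : ∫⁻ x, (∫⁻ α in Ioi (0:ℝ), {p : ℝ × X | ENNReal.ofReal p.1 < g p.2}.indicator
      (fun _ => (1:ℝ≥0∞)) (α, x)) ∂μ = ∫⁻ x, g x ∂μ := by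
    refine lintegral_congr fun x => ?_
    have h1 : (fun α : ℝ => {p : ℝ × X | ENNReal.ofReal p.1 < g p.2}.indicator
        (fun _ => (1:ℝ≥0∞)) (α, x))
        = fun α : ℝ => ({α : ℝ | ENNReal.ofReal α < g x}).indicator (fun _ => (1:ℝ≥0∞)) α := by
      funext α
      simp [Set.indicator_apply]
    have hT : MeasurableSet {α : ℝ | ENNReal.ofReal α < g x} :=
      measurableSet_lt ENNReal.measurable_ofReal measurable_const
    have h2 : ∫⁻ α in Ioi (0:ℝ), ({α : ℝ | ENNReal.ofReal α < g x}).indicator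
        (fun _ => (1:ℝ≥0∞)) α = (volume.restrict (Ioi 0)) {α : ℝ | ENNReal.ofReal α < g x} :=
      lintegral_indicator_one hT
    rw [h1, h2, Measure.restrict_apply hT]
    by_cases hx : g x = ⊤
    · have : {α : ℝ | ENNReal.ofReal α < g x} ∩ Ioi 0 = Ioi (0:ℝ) := by
        rw [hx]; simp [inter_eq_right.2, ENNReal.ofReal_lt_top]
      rw [this, Real.volume_Ioi, hx]
    · have : {α : ℝ | ENNReal.ofReal α < g x} ∩ Ioi 0 = Ioo 0 ((g x).toReal) := by
        ext α
        simp only [mem_inter_iff, mem_setOf_eq, mem_Ioi, mem_Ioo]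
        constructor
        · rintro ⟨h1, h2⟩
          exact ⟨h2, (ENNReal.ofReal_lt_iff_lt_toReal h2.le hx).1 h1⟩
        · rintro ⟨h1, h2⟩
          exact ⟨(ENNReal.ofReal_lt_iff_lt_toReal h1.le hx).2 h2, h1⟩
      rw [this, Real.volume_Ioo, sub_zero, ENNReal.ofReal_toReal hx]
  rw [← rhs, ← swap, lhs]

/-- Superlevel sets of an antitone function, intersected with `Ioo 0 t`. -/
lemma antitone_superlevel {g : ℝ → ℝ≥0∞} (hg : Antitone g) {t : ℝ} (ht : 0 < t) (c : ℝ≥0∞) :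
    volume ({s | c < g s} ∩ Ioo 0 t)
      = min (ENNReal.ofReal t) (volume ({s | c < g s} ∩ Ioi 0)) := by
  by_cases h : Ioo 0 t ⊆ {s | c < g s}
  · have h1 : {s | c < g s} ∩ Ioo 0 t = Ioo 0 t := inter_eq_right.2 h
    have h2 : ENNReal.ofReal t ≤ volume ({s | c < g s} ∩ Ioi 0) := by
      have : Ioo 0 t ⊆ {s | c < g s} ∩ Ioi 0 := fun s hs => ⟨h hs, hs.1⟩
      calc ENNReal.ofReal t = volume (Ioo 0 t) := by rw [Real.volume_Ioo, sub_zero]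
        _ ≤ _ := measure_mono this
    rw [h1, Real.volume_Ioo, sub_zero, min_eq_left h2]
  · obtain ⟨u, hu, hus⟩ := not_subset.1 h
    have hsub : {s | c < g s} ∩ Ioi 0 ⊆ Ioo 0 u := by
      rintro s ⟨hs, hs0⟩
      refine ⟨hs0, ?_⟩
      by_contra hle
      push_neg at hle
      exact hus (lt_of_lt_of_le hs (hg hle))
    have heq : {s | c < g s} ∩ Ioo 0 t = {s | c < g s} ∩ Ioi 0 := by
      apply Subset.antisymm
      · exact fun s hs => ⟨hs.1, hs.2.1⟩
      · intro s hs
        have := hsub hs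
        exact ⟨hs.1, this.1, this.2.trans hu.2⟩
    have h2 : volume ({s | c < g s} ∩ Ioi 0) ≤ ENNReal.ofReal t := by
      calc volume ({s | c < g s} ∩ Ioi 0) ≤ volume (Ioo 0 u) := measure_mono hsub
        _ = ENNReal.ofReal u := by rw [Real.volume_Ioo, sub_zero]
        _ ≤ ENNReal.ofReal t := ENNReal.ofReal_le_ofReal hu.2.le
    rw [heq, min_eq_right h2]

lemma euc_nontrivial {d : ℕ} (hd : 1 ≤ d) : Nontrivial (Euc d) := by
  refine ⟨⟨0, EuclideanSpace.single ⟨0, hd⟩ 1, fun h => ?_⟩⟩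
  have := congrArg (fun v : Euc d => v ⟨0, hd⟩) h
  simp [EuclideanSpace.single_apply] at this

/-- Intermediate value property: subsets of exact measure. -/
lemma exists_subset_volume_eq {d : ℕ} (_hd : 1 ≤ d) (s : Set (Euc d)) (hs : MeasurableSet s)
    (r : ℝ≥0∞) (hr : r ≤ volume s) (hrtop : r ≠ ⊤) :
    ∃ E, E ⊆ s ∧ MeasurableSet E ∧ volume E = r := by
  rcases eq_or_lt_of_le hr with heq | hlt
  · exact ⟨s, Subset.rfl, hs, heq.symm⟩
  by_cases hr0 : r = 0
  · exact ⟨∅, empty_subset _, MeasurableSet.empty, by simp [hr0]⟩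
  set h : ℝ → ℝ≥0∞ := fun R => volume (s ∩ closedBall 0 R) with hh
  have hmono : Monotone h := fun a b hab =>
    measure_mono (inter_subset_inter_right _ (closedBall_subset_closedBall hab))
  have hfin : ∀ R, h R < ⊤ := fun R =>
    lt_of_le_of_lt (measure_mono inter_subset_right) (measure_closedBall_lt_top)
  have hsup : volume s = ⨆ n : ℕ, h n := by
    have h1 : (⋃ n : ℕ, s ∩ closedBall 0 n) = s := by
      rw [← inter_iUnion, iUnion_closedBall_nat, inter_univ]
    rw [← h1]
    exact Monotone.measure_iUnion fun a b hab =>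
      inter_subset_inter_right _ (closedBall_subset_closedBall (by exact_mod_cast hab))
  obtain ⟨N, hN⟩ : ∃ n : ℕ, r < h n := by
    rw [hsup] at hlt
    exact lt_iSup_iff.1 hlt
  set S := {R : ℝ | r ≤ h R} with hS
  have hSne : S.Nonempty := ⟨N, hN.le⟩
  have hSbd : BddBelow S := by
    refine ⟨0, fun R hR => ?_⟩
    by_contra hneg
    push_neg at hneg
    have : h R = 0 := by
      show volume (s ∩ closedBall 0 R) = 0
      simp [closedBall_eq_empty.2 hneg]
    have hR' : r ≤ h R := hR
    rw [this] at hR'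
    exact hr0 (le_antisymm hR' (zero_le : 0 ≤ r))
  set R₀ := sInf S with hR₀
  have upper : r ≤ h R₀ := by
    have hiter : s ∩ closedBall 0 R₀ = ⋂ n : ℕ, s ∩ closedBall 0 (R₀ + 1/(n+1)) := by
      ext x
      simp only [mem_inter_iff, mem_iInter, mem_closedBall, dist_zero_right]
      constructor
      · rintro ⟨hx, hxb⟩
        exact fun n => ⟨hx, hxb.trans (le_add_of_nonneg_right (by positivity))⟩
      · intro hx
        refine ⟨(hx 0).1, ?_⟩
        refine le_of_forall_pos_le_add fun ε hε => ?_
        obtain ⟨n, hn⟩ := exists_nat_one_div_lt hε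
        exact ((hx n).2).trans (by linarith [hn.le])
    show r ≤ volume (s ∩ closedBall 0 R₀)
    rw [hiter, Antitone.measure_iInter]
    · refine le_iInf fun n => ?_
      have hlt' : R₀ < R₀ + 1/(n+1) := lt_add_of_pos_right _ (by positivity)
      obtain ⟨R, hRS, hRlt⟩ := (csInf_lt_iff hSbd hSne).1 hlt'
      exact hRS.trans (hmono hRlt.le)
    · intro a b hab
      exact inter_subset_inter_right _ (closedBall_subset_closedBall (by
        have hcast : (a:ℝ) + 1 ≤ (b:ℝ) + 1 := by
          have := (Nat.cast_le (α := ℝ)).2 hab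
          linarith
        have : 1/((b:ℝ)+1) ≤ 1/((a:ℝ)+1) := one_div_le_one_div_of_le (by positivity) hcast
        linarith))
    · exact fun n => (hs.inter measurableSet_closedBall).nullMeasurableSet
    · exact ⟨0, (hfin _).ne⟩
  have hR₀mem : R₀ ∈ S := upper
  have lower : h R₀ ≤ r := by
    have hball : volume (s ∩ ball 0 R₀) ≤ r := by
      have hcover : s ∩ ball 0 R₀ ⊆ ⋃ n : ℕ, s ∩ closedBall 0 (R₀ - 1/(n+1)) := by
        rintro x ⟨hx, hxb⟩
        rw [mem_ball, dist_zero_right] at hxb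
        obtain ⟨n, hn⟩ := exists_nat_one_div_lt (sub_pos.2 hxb)
        exact mem_iUnion.2 ⟨n, hx, by rw [mem_closedBall, dist_zero_right]; linarith⟩
      refine (measure_mono hcover).trans ?_
      have : volume (⋃ n : ℕ, s ∩ closedBall 0 (R₀ - 1/(n+1)))
          = ⨆ n : ℕ, h (R₀ - 1/(n+1)) := by
        refine Monotone.measure_iUnion fun a b hab =>
          inter_subset_inter_right _ (closedBall_subset_closedBall ?_)
        have hcast : (a:ℝ) + 1 ≤ (b:ℝ) + 1 := by
          have := (Nat.cast_le (α := ℝ)).2 hab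
          linarith
        have : 1/((b:ℝ)+1) ≤ 1/((a:ℝ)+1) := one_div_le_one_div_of_le (by positivity) hcast
        linarith
      rw [this]
      refine iSup_le fun n => ?_
      have hnot : (R₀ - 1/(n+1)) ∉ S := fun hmem => by
        have := csInf_le hSbd hmem
        have hpos : (0:ℝ) < 1/(n+1) := by positivity
        rw [← hR₀] at this
        linarith
      exact le_of_not_ge fun hle => hnot hle
    have hsphere : volume (sphere (0 : Euc d) R₀) = 0 := by
      haveI := euc_nontrivial _hd
      exact Measure.addHaar_sphere volume 0 R₀
    calc h R₀ ≤ volume ((s ∩ ball 0 R₀) ∪ sphere 0 R₀) := by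
          refine measure_mono ?_
          rintro x ⟨hx, hxb⟩
          rw [mem_closedBall, dist_zero_right] at hxb
          rcases lt_or_eq_of_le hxb with hlt' | heq'
          · exact Or.inl ⟨hx, by rwa [mem_ball, dist_zero_right]⟩
          · exact Or.inr (by rwa [mem_sphere, dist_zero_right])
      _ ≤ volume (s ∩ ball 0 R₀) + volume (sphere 0 R₀) := measure_union_le _ _
      _ = volume (s ∩ ball 0 R₀) := by rw [hsphere, add_zero]
      _ ≤ r := hball
  exact ⟨s ∩ closedBall 0 R₀, inter_subset_left, hs.inter measurableSet_closedBall,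
    le_antisymm lower upper⟩

end BathtubHelpers

set_option maxHeartbeats 1000000

/-- Bathtub principle: the integral of the decreasing rearrangement `fstar` over `(0,t)`
equals the supremum of `∫_A f` over measurable sets `A` with `|A| = t`. -/
theorem bathtub_principle (d : ℕ) (hd : 1 ≤ d) (f : Euc d → ℝ≥0∞) (hf : Measurable f)
    (hfin : ∀ t : ℝ, 0 < t → volume {x | ENNReal.ofReal t < f x} < ⊤)
    (fstar : ℝ → ℝ≥0∞)
    (hanti : ∀ s t : ℝ, 0 < s → s ≤ t → fstar t ≤ fstar s)
    (hrc : ∀ t : ℝ, 0 < t → ContinuousWithinAt fstar (Ici t) t)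
    (hequi : ∀ᵐ α ∂(volume.restrict (Ioi (0:ℝ))),
      volume {s ∈ Ioi (0:ℝ) | ENNReal.ofReal α < fstar s} = volume {x | ENNReal.ofReal α < f x})
    (t : ℝ) (ht : 0 < t) :
    ∫⁻ τ in Ioo (0:ℝ) t, fstar τ
      = ⨆ (A : Set (Euc d)) (_ : MeasurableSet A ∧ volume A = ENNReal.ofReal t),
          ∫⁻ x in A, f x := by
  haveI hnt : Nontrivial (Euc d) := euc_nontrivial hd
  have ht'pos : 0 < ENNReal.ofReal t := ENNReal.ofReal_pos.2 ht
  have ht'top : ENNReal.ofReal t ≠ ⊤ := ENNReal.ofReal_ne_top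
  set g : ℝ → ℝ≥0∞ := fun s => if 0 < s then fstar s else ⊤ with hgdef
  have hg_anti : Antitone g := by
    intro a b hab
    by_cases ha : 0 < a
    · have hb : 0 < b := ha.trans_le hab
      simp only [hgdef, if_pos ha, if_pos hb]
      exact hanti a b ha hab
    · simp only [hgdef, if_neg ha]
      exact le_top
  have hg_meas : Measurable g := hg_anti.measurable
  -- LHS as an integral of minima
  have hLHS : ∫⁻ τ in Ioo (0:ℝ) t, fstar τ
      = ∫⁻ α in Ioi (0:ℝ), min (ENNReal.ofReal t) (volume {x | ENNReal.ofReal α < f x}) := by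
    have e1 : ∫⁻ τ in Ioo (0:ℝ) t, fstar τ = ∫⁻ τ in Ioo (0:ℝ) t, g τ := by
      refine setLIntegral_congr_fun measurableSet_Ioo (fun τ hτ => ?_)
      simp only [hgdef, if_pos hτ.1]
    rw [e1, my_layercake (volume.restrict (Ioo (0:ℝ) t)) g hg_meas]
    refine lintegral_congr_ae ?_
    filter_upwards [hequi] with α hα
    have hms : MeasurableSet {x : ℝ | ENNReal.ofReal α < g x} := hg_meas measurableSet_Ioi
    rw [Measure.restrict_apply hms, antitone_superlevel hg_anti ht]
    congr 1
    rw [← hα]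
    congr 1
    ext s
    simp only [mem_inter_iff, mem_setOf_eq, mem_Ioi, mem_sep_iff]
    constructor
    · rintro ⟨h1, h2⟩
      refine ⟨h2, ?_⟩
      simp only [hgdef, if_pos h2] at h1
      exact h1
    · rintro ⟨h1, h2⟩
      refine ⟨?_, h1⟩
      simp only [hgdef, if_pos h1]
      exact h2
  -- integral over a measurable set via layer cake
  have hIntA : ∀ A : Set (Euc d), MeasurableSet A →
      ∫⁻ x in A, f x = ∫⁻ α in Ioi (0:ℝ), volume ({x | ENNReal.ofReal α < f x} ∩ A) := by
    intro A hAm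
    rw [my_layercake (volume.restrict A) f hf]
    exact lintegral_congr fun α => Measure.restrict_apply (hf measurableSet_Ioi)
  -- upper bound
  have hupper : (⨆ (A : Set (Euc d)) (_ : MeasurableSet A ∧ volume A = ENNReal.ofReal t),
        ∫⁻ x in A, f x)
      ≤ ∫⁻ α in Ioi (0:ℝ), min (ENNReal.ofReal t) (volume {x | ENNReal.ofReal α < f x}) := by
    refine iSup₂_le fun A hA => ?_
    rw [hIntA A hA.1]
    refine lintegral_mono fun α => ?_
    exact le_min ((measure_mono inter_subset_right).trans hA.2.le)
      (measure_mono inter_subset_left)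
  -- lower bound
  have hlower : ∫⁻ α in Ioi (0:ℝ), min (ENNReal.ofReal t) (volume {x | ENNReal.ofReal α < f x})
      ≤ ⨆ (A : Set (Euc d)) (_ : MeasurableSet A ∧ volume A = ENNReal.ofReal t),
          ∫⁻ x in A, f x := by
    by_cases hC : ∃ β : ℝ, 0 < β ∧ volume {x | ENNReal.ofReal β < f x} ≤ ENNReal.ofReal t
    · -- there is a level with small superlevel set
      obtain ⟨β₁, hβ₁, hβ₁le⟩ := hC
      have hμf_anti : ∀ a b : ℝ, a ≤ b →
          volume {x | ENNReal.ofReal b < f x} ≤ volume {x | ENNReal.ofReal a < f x} :=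
        fun a b hab => measure_mono fun x hx => (ENNReal.ofReal_le_ofReal hab).trans_lt hx
      set S : Set ℝ := {β : ℝ | 0 < β ∧ volume {x | ENNReal.ofReal β < f x} ≤ ENNReal.ofReal t}
        with hSdef
      have hSne : S.Nonempty := ⟨β₁, hβ₁, hβ₁le⟩
      have hSbd : BddBelow S := ⟨0, fun β hβ => hβ.1.le⟩
      set b := sInf S with hbdef
      have hb0 : 0 ≤ b := le_csInf hSne fun β hβ => hβ.1.le
      have hkey : ∀ β : ℝ, b < β → volume {x | ENNReal.ofReal β < f x} ≤ ENNReal.ofReal t := by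
        intro β hβ
        obtain ⟨γ, hγS, hγlt⟩ := (csInf_lt_iff hSbd hSne).1 hβ
        exact (hμf_anti γ β hγlt.le).trans hγS.2
      have hkey2 : ∀ α : ℝ, 0 < α → α < b →
          ENNReal.ofReal t < volume {x | ENNReal.ofReal α < f x} := by
        intro α hα hαb
        by_contra hcon
        push_neg at hcon
        exact absurd (csInf_le hSbd ⟨hα, hcon⟩) (not_le.2 hαb)
      have hDm : MeasurableSet {x : Euc d | ENNReal.ofReal b < f x} := hf measurableSet_Ioi
      have hDvol : volume {x : Euc d | ENNReal.ofReal b < f x} ≤ ENNReal.ofReal t := by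
        have hcup : {x : Euc d | ENNReal.ofReal b < f x}
            = ⋃ n : ℕ, {x : Euc d | ENNReal.ofReal (b + 1/((n:ℝ)+1)) < f x} := by
          ext x
          simp only [mem_setOf_eq, mem_iUnion]
          constructor
          · intro hx
            by_cases hfx : f x = ⊤
            · exact ⟨0, by rw [hfx]; exact ENNReal.ofReal_lt_top⟩
            · have hb' : b < (f x).toReal := (ENNReal.ofReal_lt_iff_lt_toReal hb0 hfx).1 hx
              obtain ⟨n, hn⟩ := exists_nat_one_div_lt (sub_pos.2 hb')
              exact ⟨n, (ENNReal.ofReal_lt_iff_lt_toReal (by positivity) hfx).2 (by linarith)⟩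
          · rintro ⟨n, hn⟩
            exact ((ENNReal.ofReal_le_ofReal (le_add_of_nonneg_right (by positivity))).trans_lt hn)
        rw [hcup]
        have hmu : volume (⋃ n : ℕ, {x : Euc d | ENNReal.ofReal (b + 1/((n:ℝ)+1)) < f x})
            = ⨆ n : ℕ, volume {x : Euc d | ENNReal.ofReal (b + 1/((n:ℝ)+1)) < f x} := by
          refine Monotone.measure_iUnion fun m n hmn x hx => ?_
          refine (ENNReal.ofReal_le_ofReal ?_).trans_lt hx
          have hcast : (m:ℝ) + 1 ≤ (n:ℝ) + 1 := by
            have := (Nat.cast_le (α := ℝ)).2 hmn; linarith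
          have := one_div_le_one_div_of_le (by positivity : (0:ℝ) < (m:ℝ)+1) hcast
          linarith
        rw [hmu]
        exact iSup_le fun n => hkey _ (lt_add_of_pos_right _ (by positivity))
      have hDfin : volume {x : Euc d | ENNReal.ofReal b < f x} ≠ ⊤ :=
        (hDvol.trans_lt (lt_top_iff_ne_top.2 ht'top)).ne
      have hLm : MeasurableSet {x : Euc d | f x = ENNReal.ofReal b} :=
        hf (measurableSet_singleton _)
      have hrtop : ENNReal.ofReal t - volume {x : Euc d | ENNReal.ofReal b < f x} ≠ ⊤ :=
        (tsub_le_self.trans_lt (lt_top_iff_ne_top.2 ht'top)).ne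
      have hrL : ENNReal.ofReal t - volume {x : Euc d | ENNReal.ofReal b < f x}
          ≤ volume {x : Euc d | f x = ENNReal.ofReal b} := by
        rcases eq_or_lt_of_le hb0 with hb00 | hbpos
        · -- b = 0 : the level set {f = 0} has infinite volume
          have huniv : {x : Euc d | ENNReal.ofReal b < f x} ∪ {x : Euc d | f x = ENNReal.ofReal b}
              = univ := by
            ext x
            simp only [mem_union, mem_setOf_eq, mem_univ, iff_true]
            rw [← hb00, ENNReal.ofReal_zero]
            rcases eq_or_lt_of_le (zero_le : 0 ≤ f x) with h0 | h0
            · exact Or.inr h0.symm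
            · exact Or.inl h0
          have hvt : volume (univ : Set (Euc d)) = ⊤ :=
            measure_univ_of_isAddLeftInvariant (volume : Measure (Euc d))
          have hLtop : volume {x : Euc d | f x = ENNReal.ofReal b} = ⊤ := by
            by_contra hcon
            have h1 := measure_union_le (μ := (volume : Measure (Euc d)))
              {x : Euc d | ENNReal.ofReal b < f x} {x : Euc d | f x = ENNReal.ofReal b}
            rw [huniv, hvt] at h1
            exact (ENNReal.add_lt_top.2 ⟨lt_top_iff_ne_top.2 hDfin, lt_top_iff_ne_top.2 hcon⟩).ne
              (top_le_iff.1 h1)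
          rw [hLtop]
          exact le_top
        · -- b > 0 : volume {f ≥ b} ≥ t'
          have hsubset : {x : Euc d | ENNReal.ofReal b ≤ f x}
              ⊆ {x : Euc d | ENNReal.ofReal b < f x} ∪ {x : Euc d | f x = ENNReal.ofReal b} := by
            intro x hx
            have hx' : ENNReal.ofReal b ≤ f x := hx
            rcases eq_or_lt_of_le hx' with h1 | h1
            · exact Or.inr h1.symm
            · exact Or.inl h1
          have hIc : ENNReal.ofReal t ≤ volume {x : Euc d | ENNReal.ofReal b ≤ f x} := by
            have hiter : {x : Euc d | ENNReal.ofReal b ≤ f x}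
                = ⋂ n : ℕ, {x : Euc d | ENNReal.ofReal (b - b/((n:ℝ)+2)) < f x} := by
              ext x
              simp only [mem_setOf_eq, mem_iInter]
              constructor
              · intro hx n
                refine (lt_of_lt_of_le ?_ hx)
                refine (ENNReal.ofReal_lt_ofReal_iff hbpos).2 ?_
                have : 0 < b/((n:ℝ)+2) := by positivity
                linarith
              · intro hx
                by_cases hfx : f x = ⊤
                · rw [hfx]; exact le_top
                · have hall : ∀ n : ℕ, b - b/((n:ℝ)+2) ≤ (f x).toReal := by
                    intro n
                    have hnn : (0:ℝ) ≤ b - b/((n:ℝ)+2) := by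
                      have h2 : b/((n:ℝ)+2) ≤ b := by
                        apply div_le_self hbpos.le
                        have := Nat.cast_nonneg (α := ℝ) n
                        linarith
                      linarith
                    exact ((ENNReal.ofReal_lt_iff_lt_toReal hnn hfx).1 (hx n)).le
                  have hfinal : b ≤ (f x).toReal := by
                    by_contra hcon
                    push_neg at hcon
                    have hpos : 0 < b - (f x).toReal := sub_pos.2 hcon
                    obtain ⟨n, hn⟩ := exists_nat_gt (b/(b - (f x).toReal))
                    have h2 : b < ((n:ℝ)+2) * (b - (f x).toReal) := by
                      have := (div_lt_iff₀ hpos).1 hn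
                      nlinarith [Nat.cast_nonneg (α := ℝ) n]
                    have h3 : b/((n:ℝ)+2) < b - (f x).toReal := by
                      rw [div_lt_iff₀ (by positivity)]
                      nlinarith
                    have := hall n
                    linarith
                  exact ENNReal.ofReal_le_of_le_toReal hfinal
            rw [hiter, Antitone.measure_iInter]
            · refine le_iInf fun n => ?_
              refine (hkey2 _ ?_ ?_).le
              · have h2 : b/((n:ℝ)+2) < b := by
                  apply div_lt_self hbpos
                  have := Nat.cast_nonneg (α := ℝ) n
                  linarith
                linarith
              · have : 0 < b/((n:ℝ)+2) := by positivity
                linarith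
            · intro m n hmn x hx
              refine (ENNReal.ofReal_le_ofReal ?_).trans_lt hx
              have hcast : (m:ℝ) + 2 ≤ (n:ℝ) + 2 := by
                have := (Nat.cast_le (α := ℝ)).2 hmn; linarith
              have := div_le_div_of_nonneg_left hbpos.le (by positivity : (0:ℝ) < (m:ℝ)+2) hcast
              linarith
            · exact fun n => (hf measurableSet_Ioi).nullMeasurableSet
            · refine ⟨0, (hfin _ ?_).ne⟩
              simp only [Nat.cast_zero]
              have : b/((0:ℝ)+2) < b := by
                apply div_lt_self hbpos; norm_num
              linarith
          have hsum : ENNReal.ofReal t ≤ volume {x : Euc d | ENNReal.ofReal b < f x}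
              + volume {x : Euc d | f x = ENNReal.ofReal b} :=
            hIc.trans ((measure_mono hsubset).trans (measure_union_le _ _))
          exact tsub_le_iff_left.2 hsum
      obtain ⟨E, hEL, hEm, hEv⟩ := exists_subset_volume_eq hd _ hLm _ hrL hrtop
      have hdisj : Disjoint {x : Euc d | ENNReal.ofReal b < f x} E := by
        rw [Set.disjoint_left]
        intro x hxD hxE
        have h1 : f x = ENNReal.ofReal b := hEL hxE
        have h2 : ENNReal.ofReal b < f x := hxD
        rw [h1] at h2
        exact lt_irrefl _ h2
      have hAm : MeasurableSet ({x : Euc d | ENNReal.ofReal b < f x} ∪ E) := hDm.union hEm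
      have hAv : volume ({x : Euc d | ENNReal.ofReal b < f x} ∪ E) = ENNReal.ofReal t := by
        rw [measure_union hdisj hEm, hEv, add_comm, tsub_add_cancel_of_le hDvol]
      have hptwise : ∀ α : ℝ, α ∈ Ioi (0:ℝ) →
          volume ({x | ENNReal.ofReal α < f x} ∩ ({x : Euc d | ENNReal.ofReal b < f x} ∪ E))
            = min (ENNReal.ofReal t) (volume {x | ENNReal.ofReal α < f x}) := by
        intro α hα
        rw [mem_Ioi] at hα
        rcases lt_or_ge α b with hαb | hbα
        · have h1 : ({x : Euc d | ENNReal.ofReal b < f x} ∪ E) ⊆ {x | ENNReal.ofReal α < f x} := by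
            rintro x (hx | hx)
            · exact (ENNReal.ofReal_le_ofReal hαb.le).trans_lt hx
            · have h2 : f x = ENNReal.ofReal b := hEL hx
              show ENNReal.ofReal α < f x
              rw [h2]
              exact (ENNReal.ofReal_lt_ofReal_iff (hα.trans hαb)).2 hαb
          rw [inter_eq_right.2 h1, hAv]
          exact (min_eq_left (hkey2 α hα hαb).le).symm
        · have h1 : {x : Euc d | ENNReal.ofReal α < f x}
              ⊆ {x : Euc d | ENNReal.ofReal b < f x} ∪ E :=
            fun x hx => Or.inl ((ENNReal.ofReal_le_ofReal hbα).trans_lt hx)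
          rw [inter_eq_left.2 h1]
          have h2 : volume {x : Euc d | ENNReal.ofReal α < f x} ≤ ENNReal.ofReal t := by
            rcases eq_or_lt_of_le hbα with hb2 | hb2
            · rw [← hb2]
              exact hDvol
            · exact hkey α hb2
          exact (min_eq_right h2).symm
      calc ∫⁻ α in Ioi (0:ℝ), min (ENNReal.ofReal t) (volume {x | ENNReal.ofReal α < f x})
          = ∫⁻ α in Ioi (0:ℝ),
            volume ({x | ENNReal.ofReal α < f x} ∩ ({x : Euc d | ENNReal.ofReal b < f x} ∪ E)) :=
            (setLIntegral_congr_fun measurableSet_Ioi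
              (fun α hα => (hptwise α hα).symm))
        _ = ∫⁻ x in ({x : Euc d | ENNReal.ofReal b < f x} ∪ E), f x :=
            (hIntA _ hAm).symm
        _ ≤ _ := le_iSup₂_of_le _ ⟨hAm, hAv⟩ le_rfl
    · -- all superlevel sets are large : the supremum is infinite
      push_neg at hC
      have htop : (⨆ (A : Set (Euc d)) (_ : MeasurableSet A ∧ volume A = ENNReal.ofReal t),
          ∫⁻ x in A, f x) = ⊤ := by
        apply ENNReal.eq_top_of_forall_nnreal_le
        intro c
        obtain ⟨n, hn⟩ := exists_nat_ge ((c:ℝ)/t)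
        have hβ : (0:ℝ) < n + 1 := by positivity
        have hle : ENNReal.ofReal t ≤ volume {x | ENNReal.ofReal ((n:ℝ)+1) < f x} :=
          (hC ((n:ℝ)+1) hβ).le
        obtain ⟨E, hEsub, hEm, hEv⟩ := exists_subset_volume_eq hd _ (hf measurableSet_Ioi)
          (ENNReal.ofReal t) hle ht'top
        have hint : ENNReal.ofReal (((n:ℝ)+1)*t) ≤ ∫⁻ x in E, f x := by
          have he : ENNReal.ofReal (((n:ℝ)+1)*t)
              = ENNReal.ofReal ((n:ℝ)+1) * volume E := by
            rw [hEv, ← ENNReal.ofReal_mul (by positivity)]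
          rw [he, ← setLIntegral_const E (ENNReal.ofReal ((n:ℝ)+1))]
          exact setLIntegral_mono hf fun x hx => (hEsub hx).le
        have hcle : (c : ℝ≥0∞) ≤ ENNReal.ofReal (((n:ℝ)+1)*t) := by
          rw [← ENNReal.ofReal_coe_nnreal]
          apply ENNReal.ofReal_le_ofReal
          calc (c:ℝ) = (c:ℝ)/t * t := (div_mul_cancel₀ _ ht.ne').symm
            _ ≤ ((n:ℝ)+1)*t := mul_le_mul_of_nonneg_right (hn.trans (by linarith)) ht.le
        exact hcle.trans (hint.trans (le_iSup₂_of_le E ⟨hEm, hEv⟩ le_rfl))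
      rw [htop]
      exact le_top
  rw [hLHS]
  exact le_antisymm hlower hupper
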